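/- Let B = (A, {r̄ : r ∈ L}) be a Pavelka algebra and P a proper filter of the MV reduct A. Then for r, s ∈ L: r̄ ∈ P if and only if r = 1; and r̄/P ≤ s̄/P in the quotient A/P if and only if r ≤ s. -/

import Mathlib

/-- An MV algebra: (A, ⊕, ⊙, ¬, 0, 1) satisfying Chang's axioms. -/
structure MVAlg (A : Type*) where
  add : A → A → A
  mul : A → A → A
  neg : A → A
  zero : A
  one : A
  add_comm : ∀ a b, add a b = add b a
  mul_comm : ∀ a b, mul a b = mul b a
  add_assoc : ∀ a b c, add a (add b c) = add (add a b) c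
  mul_assoc : ∀ a b c, mul a (mul b c) = mul (mul a b) c
  add_zero : ∀ a, add a zero = a
  mul_one : ∀ a, mul a one = a
  add_one : ∀ a, add a one = one
  mul_zero : ∀ a, mul a zero = zero
  add_neg : ∀ a, add a (neg a) = one
  mul_neg : ∀ a, mul a (neg a) = zero
  neg_add : ∀ a b, neg (add a b) = mul (neg a) (neg b)
  neg_mul : ∀ a b, neg (mul a b) = add (neg a) (neg b)
  neg_neg : ∀ a, neg (neg a) = a
  neg_zero : neg zero = one
  chang : ∀ a b, add (neg (add (neg a) b)) b = add (neg (add (neg b) a)) a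

namespace MVAlg
variable {A : Type*} (M : MVAlg A)
/-- The MV order: a ≤ b iff ¬a ⊕ b = 1. -/
def le (a b : A) : Prop := M.add (M.neg a) b = M.one
/-- Weak conjunction: a ∧ b = a ⊙ (¬a ⊕ b). -/
def inf (a b : A) : A := M.mul a (M.add (M.neg a) b)
end MVAlg

/-- A filter of an MV algebra: contains 1, closed under ⊙ and upward closed. -/
def IsMVFilter {A : Type*} (M : MVAlg A) (F : Set A) : Prop :=
  M.one ∈ F ∧ (∀ a ∈ F, ∀ b ∈ F, M.mul a b ∈ F) ∧ (∀ a ∈ F, ∀ b, M.le a b → b ∈ F)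

/-- The rational unit interval L = [0,1] ∩ ℚ. -/
def QI : Type := {q : ℚ // 0 ≤ q ∧ q ≤ 1}

/-- Łukasiewicz (truncated) sum on L. -/
def qadd (r s : QI) : QI :=
  ⟨min (r.1 + s.1) 1, ⟨le_min (add_nonneg r.2.1 s.2.1) zero_le_one, min_le_right _ _⟩⟩

/-- Łukasiewicz negation on L. -/
def qneg (r : QI) : QI := ⟨1 - r.1, ⟨by linarith [r.2.2], by linarith [r.2.1]⟩⟩

/-- A Pavelka algebra: an MV algebra with truth constants r̄ for r ∈ L such that
0̄ = 0, r̄ ⊕ s̄ = (r ⊕ s)‾ and ¬r̄ = (¬r)‾. -/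
structure Pavelka {A : Type*} (M : MVAlg A) where
  bar : QI → A
  bar_zero : bar ⟨0, ⟨le_refl 0, zero_le_one⟩⟩ = M.zero
  bar_add : ∀ r s, bar (qadd r s) = M.add (bar r) (bar s)
  bar_neg : ∀ r, bar (qneg r) = M.neg (bar r)


/-- Łukasiewicz product on L. -/
def qmul (r s : QI) : QI := qneg (qadd (qneg r) (qneg s))

lemma qmul_val (r s : QI) : (qmul r s).1 = max (r.1 + s.1 - 1) 0 := by
  show 1 - min ((1 - r.1) + (1 - s.1)) 1 = max (r.1 + s.1 - 1) 0
  rcases le_total ((1 - r.1) + (1 - s.1)) 1 with h | h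
  · rw [min_eq_left h, max_eq_left (by linarith)]; ring
  · rw [min_eq_right h, max_eq_right (by linarith)]; ring

def qone : QI := ⟨1, ⟨zero_le_one, le_refl 1⟩⟩

lemma bar_one {A : Type*} (M : MVAlg A) (Pav : Pavelka M) : Pav.bar qone = M.one := by
  have h : qone = qneg ⟨0, ⟨le_refl 0, zero_le_one⟩⟩ := by
    apply Subtype.ext; simp [qone, qneg]
  rw [h]; have h0 := Pav.bar_neg ⟨0, ⟨le_refl 0, zero_le_one⟩⟩; rw [Pav.bar_zero, M.neg_zero] at h0; exact h0

lemma bar_mul {A : Type*} (M : MVAlg A) (Pav : Pavelka M) (r s : QI) :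
    Pav.bar (qmul r s) = M.mul (Pav.bar r) (Pav.bar s) := by
  show Pav.bar (qneg (qadd (qneg r) (qneg s))) = _
  rw [Pav.bar_neg, Pav.bar_add, Pav.bar_neg, Pav.bar_neg, M.neg_add, M.neg_neg, M.neg_neg]

/-- iterated product r ⊙ ... ⊙ r -/
def qpow (r : QI) : ℕ → QI
  | 0 => qone
  | n + 1 => qmul r (qpow r n)

lemma qpow_val (r : QI) (n : ℕ) : (qpow r n).1 = max (1 - n * (1 - r.1)) 0 := by
  induction n with
  | zero => simp [qpow, qone]
  | succ n ih =>
    rw [show qpow r (n+1) = qmul r (qpow r n) from rfl, qmul_val, ih]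
    rcases le_total 0 (1 - (n:ℚ) * (1 - r.1)) with h | h
    · rw [max_eq_left h]
      rcases le_total 0 (1 - ((n:ℚ)+1) * (1 - r.1)) with h2 | h2
      · rw [max_eq_left (by push_cast; linarith), max_eq_left (by push_cast; linarith)]
        push_cast; ring
      · rw [max_eq_right (by push_cast; linarith), max_eq_right (by push_cast; linarith)]
    · rw [max_eq_right h, max_eq_right (by linarith [r.2.2]),
        max_eq_right (by push_cast; nlinarith [r.2.2])]

/-- For a proper filter P of a Pavelka algebra: r̄ ∈ P iff r = 1, and
r̄/P ≤ s̄/P (i.e. r̄ → s̄ ∈ P, which defines the order of the quotient A/P)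
iff r ≤ s. -/
theorem pavelka_filter_constants {A : Type*} (M : MVAlg A) (Pav : Pavelka M)
    (P : Set A) (hP : IsMVFilter M P) (hproper : M.zero ∉ P) :
    (∀ r : QI, Pav.bar r ∈ P ↔ r.1 = 1) ∧
    (∀ r s : QI, M.add (M.neg (Pav.bar r)) (Pav.bar s) ∈ P ↔ r.1 ≤ s.1) := by
  obtain ⟨hone, hmul, hup⟩ := hP
  have part1 : ∀ r : QI, Pav.bar r ∈ P ↔ r.1 = 1 := by
    intro r
    constructor
    · intro hr
      by_contra hne
      have hlt : r.1 < 1 := lt_of_le_of_ne r.2.2 hne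
      have hε : 0 < 1 - r.1 := by linarith
      -- all powers are in P
      have hpow : ∀ n, Pav.bar (qpow r n) ∈ P := by
        intro n
        induction n with
        | zero => rw [show qpow r 0 = qone from rfl, bar_one]; exact hone
        | succ n ih =>
          rw [show qpow r (n+1) = qmul r (qpow r n) from rfl, bar_mul]
          exact hmul _ hr _ ih
      set n := ⌈(1 - r.1)⁻¹⌉₊ with hn
      have h1 : (1 - r.1)⁻¹ ≤ (n:ℚ) := Nat.le_ceil _
      have h2 : 1 ≤ (n:ℚ) * (1 - r.1) := by
        rw [inv_le_iff_one_le_mul₀ hε] at h1; linarith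
      have hz : qpow r n = ⟨0, ⟨le_refl 0, zero_le_one⟩⟩ := by
        apply Subtype.ext
        rw [qpow_val, max_eq_right (by linarith)]
      have := hpow n
      rw [hz, Pav.bar_zero] at this
      exact hproper this
    · intro hr
      have : r = qone := Subtype.ext hr
      rw [this, bar_one]; exact hone
  refine ⟨part1, fun r s => ?_⟩
  have key : M.add (M.neg (Pav.bar r)) (Pav.bar s) = Pav.bar (qadd (qneg r) s) := by
    rw [Pav.bar_add, Pav.bar_neg]
  rw [key, part1]
  show min ((1 - r.1) + s.1) 1 = 1 ↔ r.1 ≤ s.1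
  constructor
  · intro h
    rcases le_total ((1 - r.1) + s.1) 1 with h2 | h2
    · rw [min_eq_left h2] at h; linarith
    · linarith
  · intro h; rw [min_eq_right (by linarith)]
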